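/- Let y^1,…,y^L (L ≥ 2) be random variables each taking values in a finite set. Then the dual total correlation dominates every 'one-versus-rest' mutual information: for every i ∈ {1,…,L}, D(y) ≥ I(y^i ; y^{[L]∖i}); consequently D(y) ≥ max_{1≤i≤L} I(y^i ; y^{[L]∖i}). -/

import Mathlib

open MeasureTheory Real

/-- Shannon entropy of a finite-valued random variable `X`, computed from its
distribution under `μ`. -/
noncomputable def entropy {Ω S : Type*} [MeasurableSpace Ω] [Fintype S]
    (μ : Measure Ω) (X : Ω → S) : ℝ :=
  ∑ x : S, Real.negMulLog ((μ (X ⁻¹' {x})).toReal)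

/-- Conditional Shannon entropy `H(X | Y)` of finite-valued random variables. -/
noncomputable def condEntropy {Ω S T : Type*} [MeasurableSpace Ω] [Fintype S] [Fintype T]
    (μ : Measure Ω) (X : Ω → S) (Y : Ω → T) : ℝ :=
  ∑ x : S, ∑ t : T,
    (μ (X ⁻¹' {x} ∩ Y ⁻¹' {t})).toReal *
      Real.log ((μ (Y ⁻¹' {t})).toReal / (μ (X ⁻¹' {x} ∩ Y ⁻¹' {t})).toReal)


/-- Mutual information `I(X;Y) = H(X) + H(Y) - H(X,Y)`. -/
noncomputable def mutualInfo {Ω S T : Type*} [MeasurableSpace Ω] [Fintype S] [Fintype T]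
    (μ : Measure Ω) (X : Ω → S) (Y : Ω → T) : ℝ :=
  entropy μ X + entropy μ Y - entropy μ (fun ω => (X ω, Y ω))

/-- b * negMulLog (a/b) = a * log (b/a) for b ≠ 0. -/
lemma aux_negMulLog (a b : ℝ) (hb : b ≠ 0) :
    b * Real.negMulLog (a / b) = a * Real.log (b / a) := by
  rcases eq_or_ne a 0 with rfl | ha
  · simp [Real.negMulLog]
  · have : a / b = (b / a)⁻¹ := by rw [inv_div]
    rw [Real.negMulLog, this, Real.log_inv]
    field_simp

/-- Log-sum inequality. -/
lemma log_sum_ineq {ι : Type*} (t : Finset ι) (a b : ι → ℝ)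
    (h0 : ∀ i ∈ t, 0 ≤ a i) (hab : ∀ i ∈ t, a i ≤ b i) :
    ∑ i ∈ t, a i * Real.log (b i / a i) ≤
      (∑ i ∈ t, a i) * Real.log ((∑ i ∈ t, b i) / (∑ i ∈ t, a i)) := by
  classical
  set A := ∑ i ∈ t, a i with hA
  rcases eq_or_lt_of_le (Finset.sum_nonneg h0) with hA0 | hA0
  · -- A = 0, hence all a i = 0
    have hz : ∀ i ∈ t, a i = 0 := by
      intro i hi
      exact (Finset.sum_eq_zero_iff_of_nonneg h0).mp hA0.symm i hi
    have hA' : A = 0 := hA0.symm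
    rw [Finset.sum_congr rfl (fun i hi => by rw [hz i hi]), hA']
    simp
  · set t' := t.filter (fun i => b i ≠ 0) with ht'
    have hbpos : ∀ i ∈ t', 0 < b i := by
      intro i hi
      rw [ht', Finset.mem_filter] at hi
      exact lt_of_le_of_ne ((h0 i hi.1).trans (hab i hi.1)) (Ne.symm hi.2)
    have hz' : ∀ i ∈ t, i ∉ t' → a i = 0 := by
      intro i hi hni
      rw [ht', Finset.mem_filter] at hni
      push_neg at hni
      have hb0 := hni hi
      have := hab i hi
      have := h0 i hi
      nlinarith [hab i hi, h0 i hi]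
    have hsa : ∑ i ∈ t', a i = A := by
      rw [hA]
      exact Finset.sum_subset (Finset.filter_subset _ _) hz'
    set B' := ∑ i ∈ t', b i with hB'
    have hAB' : A ≤ B' := by
      rw [← hsa, hB']; exact Finset.sum_le_sum (fun i hi => hab i (Finset.filter_subset _ _ hi))
    have hB'pos : 0 < B' := lt_of_lt_of_le hA0 hAB'
    have hB'B : B' ≤ ∑ i ∈ t, b i := by
      refine Finset.sum_le_sum_of_subset_of_nonneg (Finset.filter_subset _ _) ?_
      intro i hi _
      exact (h0 i hi).trans (hab i hi)
    have hlhs : ∑ i ∈ t, a i * Real.log (b i / a i) = ∑ i ∈ t', a i * Real.log (b i / a i) :=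
      (Finset.sum_subset (Finset.filter_subset _ _)
        (fun i hi hni => by rw [hz' i hi hni]; ring)).symm
    -- Jensen
    have hJ := Real.concaveOn_negMulLog.le_map_centerMass (t := t') (w := b)
      (p := fun i => a i / b i)
      (fun i hi => le_of_lt (hbpos i hi)) (by rw [← hB'] at *; exact hB'pos)
      (fun i hi => Set.mem_Ici.mpr (div_nonneg (h0 i (Finset.filter_subset _ _ hi))
        (le_of_lt (hbpos i hi))))
    rw [Finset.centerMass, Finset.centerMass] at hJ
    have hc : ∑ i ∈ t', b i • (a i / b i) = A := by
      rw [← hsa]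
      exact Finset.sum_congr rfl (fun i hi => by
        rw [smul_eq_mul, mul_div_cancel₀ _ (ne_of_gt (hbpos i hi))])
    rw [hc, ← hB'] at hJ
    have hJ' : ∑ i ∈ t', b i * Real.negMulLog (a i / b i) ≤ B' * Real.negMulLog (B'⁻¹ * A) := by
      have := mul_le_mul_of_nonneg_left hJ (le_of_lt hB'pos)
      simp only [smul_eq_mul, Finset.mul_sum, Function.comp_apply] at this ⊢
      calc ∑ i ∈ t', b i * Real.negMulLog (a i / b i)
          = ∑ i ∈ t', B' * (B'⁻¹ * (b i * Real.negMulLog (a i / b i))) := by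
            refine Finset.sum_congr rfl (fun i hi => ?_)
            field_simp
        _ ≤ B' * Real.negMulLog (B'⁻¹ * A) := by
            convert this using 2 <;> ring_nf
    have hterm : ∀ i ∈ t', b i * Real.negMulLog (a i / b i) = a i * Real.log (b i / a i) :=
      fun i hi => aux_negMulLog (a i) (b i) (ne_of_gt (hbpos i hi))
    have hfin : B' * Real.negMulLog (B'⁻¹ * A) = A * Real.log (B' / A) := by
      have : B'⁻¹ * A = A / B' := by ring
      rw [this]
      exact aux_negMulLog A B' (ne_of_gt hB'pos)
    have hmono : A * Real.log (B' / A) ≤ A * Real.log ((∑ i ∈ t, b i) / A) := by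
      apply mul_le_mul_of_nonneg_left _ (le_of_lt hA0)
      apply Real.log_le_log (div_pos hB'pos hA0)
      exact div_le_div_of_nonneg_right hB'B hA0.le
    calc ∑ i ∈ t, a i * Real.log (b i / a i)
        = ∑ i ∈ t', b i * Real.negMulLog (a i / b i) := by
          rw [hlhs]; exact (Finset.sum_congr rfl hterm).symm
      _ ≤ B' * Real.negMulLog (B'⁻¹ * A) := hJ'
      _ = A * Real.log (B' / A) := hfin
      _ ≤ A * Real.log ((∑ i ∈ t, b i) / A) := hmono



section Lemmas

variable {Ω : Type*} [MeasurableSpace Ω] (μ : Measure Ω) [IsProbabilityMeasure μ]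

lemma entropy_comp_injective {S T : Type*} [Fintype S] [Fintype T]
    (X : Ω → S) (f : S → T) (hf : Function.Injective f) :
    entropy μ (fun ω => f (X ω)) = entropy μ X := by
  classical
  unfold entropy
  have hpre : ∀ x : S, (fun ω => f (X ω)) ⁻¹' {f x} = X ⁻¹' {x} := by
    intro x; ext ω; simp [hf.eq_iff]
  have h1 : ∑ x : S, Real.negMulLog ((μ (X ⁻¹' {x})).toReal)
      = ∑ t ∈ Finset.univ.image f, Real.negMulLog ((μ ((fun ω => f (X ω)) ⁻¹' {t})).toReal) := by
    rw [Finset.sum_image (fun x _ y _ h => hf h)]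
    exact Finset.sum_congr rfl (fun x _ => by rw [hpre x])
  rw [h1]
  refine (Finset.sum_subset (Finset.subset_univ _) ?_).symm
  intro t _ ht
  have : (fun ω => f (X ω)) ⁻¹' {t} = ∅ := by
    ext ω
    simp only [Set.mem_preimage, Set.mem_singleton_iff, Set.mem_empty_iff_false, iff_false]
    intro h
    exact ht (Finset.mem_image.mpr ⟨X ω, Finset.mem_univ _, h⟩)
  simp [this]

lemma sum_measure_inter {S : Type*} [Fintype S]
    (X : Ω → S) (hX : ∀ x, MeasurableSet (X ⁻¹' {x})) (B : Set Ω) (hB : MeasurableSet B) :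
    (μ B).toReal = ∑ x : S, (μ (X ⁻¹' {x} ∩ B)).toReal := by
  classical
  have hU : B = ⋃ x : S, X ⁻¹' {x} ∩ B := by
    ext ω
    simp only [Set.mem_iUnion, Set.mem_inter_iff, Set.mem_preimage, Set.mem_singleton_iff]
    exact ⟨fun h => ⟨X ω, rfl, h⟩, fun ⟨_, _, h⟩ => h⟩
  have hd : Pairwise (Function.onFun Disjoint (fun x : S => X ⁻¹' {x} ∩ B)) := by
    intro x y hxy
    refine Set.disjoint_left.mpr ?_
    rintro ω ⟨h1, _⟩ ⟨h2, _⟩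
    exact hxy (h1.symm.trans h2)
  calc (μ B).toReal = (μ (⋃ x : S, X ⁻¹' {x} ∩ B)).toReal := by rw [← hU]
    _ = (∑ x : S, μ (X ⁻¹' {x} ∩ B)).toReal := by
        rw [measure_iUnion hd (fun x => (hX x).inter hB), tsum_fintype]
    _ = ∑ x : S, (μ (X ⁻¹' {x} ∩ B)).toReal :=
        ENNReal.toReal_sum (fun x _ => measure_ne_top μ _)

lemma chain_rule {S T : Type*} [Fintype S] [Fintype T]
    (X : Ω → S) (Y : Ω → T)
    (hX : ∀ x, MeasurableSet (X ⁻¹' {x})) (hY : ∀ t, MeasurableSet (Y ⁻¹' {t})) :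
    entropy μ (fun ω => (X ω, Y ω)) = entropy μ Y + condEntropy μ X Y := by
  classical
  unfold entropy condEntropy
  rw [Fintype.sum_prod_type]
  have hmain : ∀ t : T,
      ∑ x : S, Real.negMulLog ((μ ((fun ω => (X ω, Y ω)) ⁻¹' {(x, t)})).toReal)
        = Real.negMulLog ((μ (Y ⁻¹' {t})).toReal)
          + ∑ x : S, (μ (X ⁻¹' {x} ∩ Y ⁻¹' {t})).toReal *
              Real.log ((μ (Y ⁻¹' {t})).toReal / (μ (X ⁻¹' {x} ∩ Y ⁻¹' {t})).toReal) := by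
    intro t
    set q := (μ (Y ⁻¹' {t})).toReal with hqdef
    set p := fun x => (μ (X ⁻¹' {x} ∩ Y ⁻¹' {t})).toReal with hpdef
    have hpre : ∀ x : S, (fun ω => (X ω, Y ω)) ⁻¹' {(x, t)} = X ⁻¹' {x} ∩ Y ⁻¹' {t} := by
      intro x; ext ω; simp [Prod.ext_iff]
    have hq : q = ∑ x : S, p x := sum_measure_inter μ X hX _ (hY t)
    have hp0 : ∀ x, 0 ≤ p x := fun x => ENNReal.toReal_nonneg
    have hpq : ∀ x, p x ≤ q := by
      intro x
      rw [hq]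
      exact Finset.single_le_sum (fun x _ => hp0 x) (Finset.mem_univ x)
    have key : ∀ x : S, Real.negMulLog (p x) = -(p x * Real.log q) + p x * Real.log (q / p x) := by
      intro x
      rcases eq_or_ne (p x) 0 with h | h
      · simp [h]
      · have hq0 : q ≠ 0 := fun h' => h (le_antisymm (h' ▸ hpq x) (hp0 x))
        rw [Real.log_div hq0 h, Real.negMulLog]
        ring
    calc ∑ x : S, Real.negMulLog ((μ ((fun ω => (X ω, Y ω)) ⁻¹' {(x, t)})).toReal)
        = ∑ x : S, Real.negMulLog (p x) := by
          refine Finset.sum_congr rfl (fun x _ => ?_); rw [hpre x]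
      _ = ∑ x : S, (-(p x * Real.log q) + p x * Real.log (q / p x)) :=
          Finset.sum_congr rfl (fun x _ => key x)
      _ = -(q * Real.log q) + ∑ x : S, p x * Real.log (q / p x) := by
          rw [Finset.sum_add_distrib, Finset.sum_neg_distrib, ← Finset.sum_mul, ← hq]
      _ = Real.negMulLog q + ∑ x : S, p x * Real.log (q / p x) := by
          rw [Real.negMulLog]; ring
  calc ∑ x : S, ∑ t : T, Real.negMulLog ((μ ((fun ω => (X ω, Y ω)) ⁻¹' {(x, t)})).toReal)
      = ∑ t : T, ∑ x : S, Real.negMulLog ((μ ((fun ω => (X ω, Y ω)) ⁻¹' {(x, t)})).toReal) :=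
        Finset.sum_comm
    _ = ∑ t : T, (Real.negMulLog ((μ (Y ⁻¹' {t})).toReal)
          + ∑ x : S, (μ (X ⁻¹' {x} ∩ Y ⁻¹' {t})).toReal *
              Real.log ((μ (Y ⁻¹' {t})).toReal / (μ (X ⁻¹' {x} ∩ Y ⁻¹' {t})).toReal)) :=
        Finset.sum_congr rfl (fun t _ => hmain t)
    _ = (∑ t : T, Real.negMulLog ((μ (Y ⁻¹' {t})).toReal))
          + ∑ t : T, ∑ x : S, (μ (X ⁻¹' {x} ∩ Y ⁻¹' {t})).toReal *
              Real.log ((μ (Y ⁻¹' {t})).toReal / (μ (X ⁻¹' {x} ∩ Y ⁻¹' {t})).toReal) :=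
        Finset.sum_add_distrib
    _ = (∑ t : T, Real.negMulLog ((μ (Y ⁻¹' {t})).toReal))
          + ∑ x : S, ∑ t : T, (μ (X ⁻¹' {x} ∩ Y ⁻¹' {t})).toReal *
              Real.log ((μ (Y ⁻¹' {t})).toReal / (μ (X ⁻¹' {x} ∩ Y ⁻¹' {t})).toReal) := by
        rw [Finset.sum_comm]

lemma condEntropy_nonneg {S T : Type*} [Fintype S] [Fintype T] (X : Ω → S) (Y : Ω → T) :
    0 ≤ condEntropy μ X Y := by
  refine Finset.sum_nonneg (fun x _ => Finset.sum_nonneg (fun t _ => ?_))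
  set p := (μ (X ⁻¹' {x} ∩ Y ⁻¹' {t})).toReal
  set q := (μ (Y ⁻¹' {t})).toReal
  rcases eq_or_ne p 0 with h | h
  · simp [h]
  have hp : 0 < p := lt_of_le_of_ne ENNReal.toReal_nonneg (Ne.symm h)
  have hpq : p ≤ q :=
    ENNReal.toReal_mono (measure_ne_top μ _) (measure_mono Set.inter_subset_right)
  exact mul_nonneg hp.le (Real.log_nonneg ((one_le_div hp).mpr hpq))

lemma preimage_comp_measurableSet {S T : Type*} [Fintype S]
    (W : Ω → S) (hW : ∀ w, MeasurableSet (W ⁻¹' {w})) (f : S → T) (t : T) :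
    MeasurableSet ((fun ω => f (W ω)) ⁻¹' {t}) := by
  classical
  have : (fun ω => f (W ω)) ⁻¹' {t} = ⋃ w ∈ {w : S | f w = t}, W ⁻¹' {w} := by
    ext ω
    simp only [Set.mem_preimage, Set.mem_singleton_iff, Set.mem_iUnion, Set.mem_setOf_eq,
      exists_prop]
    exact ⟨fun h => ⟨W ω, h, rfl⟩, fun ⟨w, hw, h⟩ => h ▸ hw⟩
  rw [this]
  exact MeasurableSet.biUnion (Set.to_countable _) (fun w _ => hW w)

lemma condEntropy_comp_le {S U T : Type*} [Fintype S] [Fintype U] [Fintype T]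
    (X : Ω → S) (W : Ω → U) (f : U → T)
    (hX : ∀ x, MeasurableSet (X ⁻¹' {x})) (hW : ∀ w, MeasurableSet (W ⁻¹' {w})) :
    condEntropy μ X W ≤ condEntropy μ X (fun ω => f (W ω)) := by
  classical
  unfold condEntropy
  refine Finset.sum_le_sum (fun x _ => ?_)
  set a := fun w : U => (μ (X ⁻¹' {x} ∩ W ⁻¹' {w})).toReal with hadef
  set b := fun w : U => (μ (W ⁻¹' {w})).toReal with hbdef
  have ha0 : ∀ w, 0 ≤ a w := fun w => ENNReal.toReal_nonneg
  have hab : ∀ w, a w ≤ b w := fun w =>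
    ENNReal.toReal_mono (measure_ne_top μ _) (measure_mono Set.inter_subset_right)
  -- fiber decomposition of sums
  have hfib : ∀ t : T,
      (μ (X ⁻¹' {x} ∩ (fun ω => f (W ω)) ⁻¹' {t})).toReal
        = ∑ w ∈ Finset.univ.filter (fun w => f w = t), a w := by
    intro t
    have hB : MeasurableSet (X ⁻¹' {x} ∩ (fun ω => f (W ω)) ⁻¹' {t}) :=
      (hX x).inter (preimage_comp_measurableSet W hW f t)
    rw [sum_measure_inter μ W hW _ hB]
    rw [Finset.sum_filter]
    refine Finset.sum_congr rfl (fun w _ => ?_)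
    by_cases hfw : f w = t
    · rw [if_pos hfw]
      have hset : W ⁻¹' {w} ∩ (X ⁻¹' {x} ∩ (fun ω => f (W ω)) ⁻¹' {t})
          = X ⁻¹' {x} ∩ W ⁻¹' {w} := by
        ext ω
        simp only [Set.mem_inter_iff, Set.mem_preimage, Set.mem_singleton_iff]
        constructor
        · rintro ⟨hw, hx, -⟩; exact ⟨hx, hw⟩
        · rintro ⟨hx, hw⟩; exact ⟨hw, hx, by rw [hw, hfw]⟩
      rw [hset]
    · rw [if_neg hfw]
      have hset : W ⁻¹' {w} ∩ (X ⁻¹' {x} ∩ (fun ω => f (W ω)) ⁻¹' {t}) = (∅ : Set Ω) := by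
        ext ω
        simp only [Set.mem_inter_iff, Set.mem_preimage, Set.mem_singleton_iff,
          Set.mem_empty_iff_false, iff_false, not_and]
        intro hw hx hft
        exact hfw (by rw [← hw]; exact hft)
      rw [hset, measure_empty, ENNReal.toReal_zero]
  have hfibB : ∀ t : T,
      (μ ((fun ω => f (W ω)) ⁻¹' {t})).toReal
        = ∑ w ∈ Finset.univ.filter (fun w => f w = t), b w := by
    intro t
    have hB : MeasurableSet ((fun ω => f (W ω)) ⁻¹' {t}) :=
      preimage_comp_measurableSet W hW f t
    rw [sum_measure_inter μ W hW _ hB]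
    rw [Finset.sum_filter]
    refine Finset.sum_congr rfl (fun w _ => ?_)
    by_cases hfw : f w = t
    · rw [if_pos hfw]
      have hset : W ⁻¹' {w} ∩ (fun ω => f (W ω)) ⁻¹' {t} = W ⁻¹' {w} := by
        ext ω
        simp only [Set.mem_inter_iff, Set.mem_preimage, Set.mem_singleton_iff]
        exact ⟨fun ⟨hw, _⟩ => hw, fun hw => ⟨hw, by rw [hw, hfw]⟩⟩
      rw [hset]
    · rw [if_neg hfw]
      have hset : W ⁻¹' {w} ∩ (fun ω => f (W ω)) ⁻¹' {t} = (∅ : Set Ω) := by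
        ext ω
        simp only [Set.mem_inter_iff, Set.mem_preimage, Set.mem_singleton_iff,
          Set.mem_empty_iff_false, iff_false, not_and]
        intro hw hft
        exact hfw (by rw [← hw]; exact hft)
      rw [hset, measure_empty, ENNReal.toReal_zero]
  calc ∑ w : U, a w * Real.log (b w / a w)
      = ∑ t : T, ∑ w ∈ Finset.univ.filter (fun w => f w = t), a w * Real.log (b w / a w) :=
        (Finset.sum_fiberwise_of_maps_to (fun w _ => Finset.mem_univ (f w)) _).symm
    _ ≤ ∑ t : T, (μ (X ⁻¹' {x} ∩ (fun ω => f (W ω)) ⁻¹' {t})).toReal *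
          Real.log ((μ ((fun ω => f (W ω)) ⁻¹' {t})).toReal /
            (μ (X ⁻¹' {x} ∩ (fun ω => f (W ω)) ⁻¹' {t})).toReal) := by
        refine Finset.sum_le_sum (fun t _ => ?_)
        rw [hfib t, hfibB t]
        exact log_sum_ineq _ a b (fun w _ => ha0 w) (fun w _ => hab w)

end Lemmas
section Tup

variable {Ω : Type*} [MeasurableSpace Ω] {L : ℕ} {S : Fin L → Type*}
  [∀ i, Fintype (S i)] [∀ i, MeasurableSpace (S i)] [∀ i, MeasurableSingletonClass (S i)]

/-- Tuple of coordinates indexed by a finset. -/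
def tup (S : Fin L → Type*) (y : ∀ i, Ω → S i) (A : Finset (Fin L)) :
    Ω → ∀ j : {x : Fin L // x ∈ A}, S j.1 := fun ω j => y j.1 ω

lemma tup_preimage_ms (y : ∀ i, Ω → S i) (hy : ∀ i, Measurable (y i)) (A : Finset (Fin L))
    (v : ∀ j : {x : Fin L // x ∈ A}, S j.1) : MeasurableSet (tup S y A ⁻¹' {v}) := by
  have hset : tup S y A ⁻¹' {v} = ⋂ k : {x : Fin L // x ∈ A}, (y k.1) ⁻¹' {v k} := by
    ext ω
    simp [tup, funext_iff]
  rw [hset]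
  exact MeasurableSet.iInter (fun k => hy k.1 (measurableSet_singleton _))

variable (μ : Measure Ω) [IsProbabilityMeasure μ]

lemma entropy_tup_insert (y : ∀ i, Ω → S i) (hy : ∀ i, Measurable (y i))
    (A : Finset (Fin L)) (j : Fin L) :
    entropy μ (tup S y (insert j A))
      = entropy μ (tup S y A) + condEntropy μ (y j) (tup S y A) := by
  classical
  set f : (∀ k : {x : Fin L // x ∈ insert j A}, S k.1) →
      S j × (∀ k : {x : Fin L // x ∈ A}, S k.1) :=
    fun v => (v ⟨j, Finset.mem_insert_self j A⟩,
      fun k => v ⟨k.1, Finset.mem_insert_of_mem k.2⟩) with hfdef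
  have hfinj : Function.Injective f := by
    intro v v' h
    have h1 : v ⟨j, Finset.mem_insert_self j A⟩ = v' ⟨j, Finset.mem_insert_self j A⟩ :=
      congrArg Prod.fst h
    have h2 := congrArg Prod.snd h
    funext k
    rcases Finset.mem_insert.mp k.2 with hk | hk
    · have hkj : k = ⟨j, Finset.mem_insert_self j A⟩ := Subtype.ext hk
      rw [hkj]; exact h1
    · have hkk : k = ⟨k.1, Finset.mem_insert_of_mem hk⟩ := Subtype.ext rfl
      rw [hkk]
      exact congrFun h2 ⟨k.1, hk⟩
  have hcomp : entropy μ (fun ω => f (tup S y (insert j A) ω))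
      = entropy μ (tup S y (insert j A)) := entropy_comp_injective μ _ f hfinj
  have hpair : (fun ω => f (tup S y (insert j A) ω))
      = (fun ω => (y j ω, tup S y A ω)) := rfl
  rw [hpair] at hcomp
  rw [← hcomp]
  exact chain_rule μ (y j) (tup S y A)
    (fun x => hy j (measurableSet_singleton x)) (tup_preimage_ms y hy A)

lemma condEntropy_tup_mono (y : ∀ i, Ω → S i) (hy : ∀ i, Measurable (y i))
    {A B : Finset (Fin L)} (hAB : A ⊆ B) (j : Fin L) :
    condEntropy μ (y j) (tup S y B) ≤ condEntropy μ (y j) (tup S y A) := by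
  have h := condEntropy_comp_le μ (y j) (tup S y B)
    (fun (v : ∀ k : {x : Fin L // x ∈ B}, S k.1) (k : {x : Fin L // x ∈ A}) => v ⟨k.1, hAB k.2⟩)
    (fun x => hy j (measurableSet_singleton x)) (tup_preimage_ms y hy B)
  exact h

lemma tup_chain_ge (y : ∀ i, Ω → S i) (hy : ∀ i, Measurable (y i)) (i : Fin L)
    (A : Finset (Fin L)) (hiA : i ∉ A) :
    entropy μ (tup S y {i})
        + ∑ j ∈ A, condEntropy μ (y j) (tup S y (Finset.univ.erase j))
      ≤ entropy μ (tup S y (insert i A)) := by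
  classical
  induction A using Finset.induction_on with
  | empty => simp; exact le_rfl
  | @insert j s hj ih =>
    have hij : i ≠ j := fun h => hiA (h ▸ Finset.mem_insert_self j s)
    have his : i ∉ s := fun h => hiA (Finset.mem_insert_of_mem h)
    have hsub : insert i s ⊆ Finset.univ.erase j := by
      intro k hk
      refine Finset.mem_erase.mpr ⟨?_, Finset.mem_univ k⟩
      rcases Finset.mem_insert.mp hk with rfl | hk
      · exact hij
      · exact fun h => hj (h ▸ hk)
    have hcond : condEntropy μ (y j) (tup S y (Finset.univ.erase j))
        ≤ condEntropy μ (y j) (tup S y (insert i s)) :=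
      condEntropy_tup_mono μ y hy hsub j
    have hstep : entropy μ (tup S y (insert j (insert i s)))
        = entropy μ (tup S y (insert i s)) + condEntropy μ (y j) (tup S y (insert i s)) :=
      entropy_tup_insert μ y hy (insert i s) j
    rw [Finset.insert_comm i j s, hstep, Finset.sum_insert hj]
    have := ih his
    linarith

end Tup

/-- The dual total correlation `D(y) = ∑ᵢ H(y^{[L]∖i}) - (L-1)·H(y¹,…,y^L)` dominates
every "one-versus-rest" mutual information `I(yⁱ ; y^{[L]∖i})`, and in particular their
maximum over `i`. -/
theorem dual_total_correlation_ge_mutualInfo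
    {Ω : Type*} [MeasurableSpace Ω] (μ : Measure Ω) [IsProbabilityMeasure μ]
    (L : ℕ) (hL : 2 ≤ L)
    (S : Fin L → Type*) [∀ i, Fintype (S i)] [∀ i, MeasurableSpace (S i)]
    [∀ i, MeasurableSingletonClass (S i)]
    (y : ∀ i, Ω → S i) (hy : ∀ i, Measurable (y i)) :
    (∀ i : Fin L,
      (∑ i : Fin L, entropy μ (fun ω => fun j : {j : Fin L // j ≠ i} => y j.1 ω))
          - (L - 1 : ℝ) * entropy μ (fun ω => fun i => y i ω)
        ≥ mutualInfo μ (y i) (fun ω => fun j : {j : Fin L // j ≠ i} => y j.1 ω)) ∧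
    (∑ i : Fin L, entropy μ (fun ω => fun j : {j : Fin L // j ≠ i} => y j.1 ω))
        - (L - 1 : ℝ) * entropy μ (fun ω => fun i => y i ω)
      ≥ Finset.univ.sup' ⟨⟨0, by omega⟩, Finset.mem_univ _⟩
          (fun i : Fin L =>
            mutualInfo μ (y i) (fun ω => fun j : {j : Fin L // j ≠ i} => y j.1 ω)) := by
  classical
  set H : ℝ := entropy μ (tup S y Finset.univ) with hH
  set C : Fin L → ℝ := fun j => condEntropy μ (y j) (tup S y (Finset.univ.erase j)) with hCdef
  set R : Fin L → ℝ := fun j => entropy μ (tup S y (Finset.univ.erase j)) with hRdef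
  -- identification: full tuple
  have hr : Function.Injective
      (fun (v : ∀ i, S i) (k : {x : Fin L // x ∈ (Finset.univ : Finset (Fin L))}) => v k.1) := by
    intro v v' h
    funext i
    exact congrFun h ⟨i, Finset.mem_univ i⟩
  have hfull : H = entropy μ (fun ω => fun i => y i ω) := by
    rw [hH]
    exact entropy_comp_injective μ (fun ω => fun i => y i ω)
      (fun (v : ∀ i, S i) (k : {x : Fin L // x ∈ (Finset.univ : Finset (Fin L))}) => v k.1)
      hr
  -- identification: rest tuples
  have hrest : ∀ i : Fin L,
      entropy μ (fun ω => fun j : {j : Fin L // j ≠ i} => y j.1 ω) = R i := by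
    intro i
    have hg : Function.Injective
        (fun (v : ∀ k : {x : Fin L // x ∈ Finset.univ.erase i}, S k.1)
            (j : {j : Fin L // j ≠ i}) =>
          v ⟨j.1, Finset.mem_erase.mpr ⟨j.2, Finset.mem_univ _⟩⟩) := by
      intro v v' h
      funext k
      have hk1 : k.1 ≠ i := (Finset.mem_erase.mp k.2).1
      have hkk : (⟨k.1, Finset.mem_erase.mpr ⟨hk1, Finset.mem_univ _⟩⟩ :
          {x : Fin L // x ∈ Finset.univ.erase i}) = k := Subtype.ext rfl
      rw [← hkk]
      exact congrFun h ⟨k.1, hk1⟩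
    exact entropy_comp_injective μ (tup S y (Finset.univ.erase i))
      (fun (v : ∀ k : {x : Fin L // x ∈ Finset.univ.erase i}, S k.1)
          (j : {j : Fin L // j ≠ i}) =>
        v ⟨j.1, Finset.mem_erase.mpr ⟨j.2, Finset.mem_univ _⟩⟩) hg
  -- identification: pair with rest
  have hpair : ∀ i : Fin L,
      entropy μ (fun ω => (y i ω, fun j : {j : Fin L // j ≠ i} => y j.1 ω)) = H := by
    intro i
    have he : Function.Injective
        (fun (v : ∀ k, S k) => (v i, fun j : {j : Fin L // j ≠ i} => v j.1)) := by
      intro v v' h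
      funext k
      by_cases hk : k = i
      · subst hk; exact congrArg Prod.fst h
      · exact congrFun (congrArg Prod.snd h) ⟨k, hk⟩
    rw [hfull]
    exact entropy_comp_injective μ (fun ω => fun i => y i ω)
      (fun (v : ∀ k, S k) => (v i, fun j : {j : Fin L // j ≠ i} => v j.1)) he
  -- identification: singleton
  have hsingle : ∀ i : Fin L, entropy μ (y i) = entropy μ (tup S y {i}) := by
    intro i
    have hf : Function.Injective
        (fun (v : ∀ k : {x : Fin L // x ∈ ({i} : Finset (Fin L))}, S k.1) =>
          v ⟨i, Finset.mem_singleton_self i⟩) := by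
      intro v v' h
      funext k
      have hkk : k = ⟨i, Finset.mem_singleton_self i⟩ :=
        Subtype.ext (Finset.mem_singleton.mp k.2)
      rw [hkk]
      exact h
    exact entropy_comp_injective μ (tup S y ({i} : Finset (Fin L)))
      (fun (v : ∀ k : {x : Fin L // x ∈ ({i} : Finset (Fin L))}, S k.1) =>
        v ⟨i, Finset.mem_singleton_self i⟩) hf
  -- chain rule split
  have hsplit : ∀ j : Fin L, H = R j + C j := by
    intro j
    have h := entropy_tup_insert μ y hy (Finset.univ.erase j) j
    rw [Finset.insert_erase (Finset.mem_univ j)] at h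
    exact h
  -- main inequality
  have hmain : ∀ i : Fin L,
      entropy μ (y i) + ∑ j ∈ Finset.univ.erase i, C j ≤ H := by
    intro i
    have h := tup_chain_ge μ y hy i (Finset.univ.erase i) (Finset.notMem_erase i _)
    rw [Finset.insert_erase (Finset.mem_univ i)] at h
    rw [hsingle i]
    exact h
  have hsum : (∑ i : Fin L, entropy μ (fun ω => fun j : {j : Fin L // j ≠ i} => y j.1 ω))
      = ∑ j : Fin L, R j := Finset.sum_congr rfl (fun j _ => hrest j)
  have hRsum : ∑ j : Fin L, R j = L * H - ∑ j : Fin L, C j := by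
    have hRj : ∀ j : Fin L, R j = H - C j := fun j => by have := hsplit j; linarith
    rw [Finset.sum_congr rfl (fun j _ => hRj j), Finset.sum_sub_distrib, Finset.sum_const,
      Finset.card_univ, Fintype.card_fin, nsmul_eq_mul]
  have part1 : ∀ i : Fin L,
      (∑ i : Fin L, entropy μ (fun ω => fun j : {j : Fin L // j ≠ i} => y j.1 ω))
          - (L - 1 : ℝ) * entropy μ (fun ω => fun i => y i ω)
        ≥ mutualInfo μ (y i) (fun ω => fun j : {j : Fin L // j ≠ i} => y j.1 ω) := by
    intro i
    have hI : mutualInfo μ (y i) (fun ω => fun j : {j : Fin L // j ≠ i} => y j.1 ω)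
        = entropy μ (y i) + R i - H := by
      simp only [mutualInfo]
      rw [hrest i, hpair i]
    have hCsplit : ∑ j : Fin L, C j = C i + ∑ j ∈ Finset.univ.erase i, C j :=
      (Finset.add_sum_erase _ _ (Finset.mem_univ i)).symm
    have hmi := hmain i
    have hRi := hsplit i
    rw [ge_iff_le, hI, hsum, hRsum, ← hfull]
    linarith
  refine ⟨part1, ?_⟩
  rw [ge_iff_le]
  exact Finset.sup'_le _ _ (fun i _ => part1 i)
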